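/- arXiv:1304.1477 — 2 statements merged into one kernel-verified Lean document; each statement's English description precedes it below -/
import Mathlib

section
/- There exist constants with the following properties, valid for all integers n ≥ 1: for each fixed 1 ≤ p < 3 there is C_p with ‖e_n‖_{L^p(B)} ≤ C_p; there is C with ‖e_n‖_{L³(B)} ≤ C (log(n+1))^{1/3}; and for each fixed p > 3 there is C_p with ‖e_n‖_{L^p(B)} ≤ C_p n^{1−3/p}. -/
open MeasureTheory ProbabilityTheory Filter Real Set
open scoped Classical

noncomputable section

/-- The unit ball in `ℝ³`. -/
def ballB : Set (EuclideanSpace ℝ (Fin 3)) := Metric.ball 0 1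

/-- The `n`-th radial Dirichlet eigenfunction of `-Δ` on the unit ball in `ℝ³`,
`e_n(x) = (2π)^{-1/2} sin(nπ|x|)/|x|`, extended by continuity at `x = 0`. -/
def en (n : ℕ) (x : EuclideanSpace ℝ (Fin 3)) : ℝ :=
  if x = 0 then (2 * π) ^ (-(1:ℝ)/2) * (n * π)
  else (2 * π) ^ (-(1:ℝ)/2) * Real.sin (n * π * ‖x‖) / ‖x‖

/-- Japanese bracket `⟨x⟩ = (1 + |x|²)^{1/2}`. -/
def jap (x : ℝ) : ℝ := Real.sqrt (1 + x ^ 2)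

/-- `L^p` norm over the unit ball of a complex-valued function. -/
def lpNormB (p : ℝ) (f : EuclideanSpace ℝ (Fin 3) → ℂ) : ℝ :=
  (∫ x in ballB, ‖f x‖ ^ p) ^ (1 / p)

/-- Mixed norm `L^p_x(B; L^q_t([0,T]))`. -/
def lpLqNorm (p q T : ℝ) (F : ℝ → EuclideanSpace ℝ (Fin 3) → ℂ) : ℝ :=
  (∫ x in ballB, ((∫ t in Set.Icc (0:ℝ) T, ‖F t x‖ ^ q) ^ (1/q)) ^ p) ^ (1/p)

/-- `H^s` norm of a function `Σ c_n e_n`, in terms of its coefficients. -/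
def hsNorm (s : ℝ) (c : ℕ → ℂ) : ℝ :=
  (∑' n : ℕ, (n:ℝ) ^ (2*s) * ‖c n‖ ^ 2) ^ ((1:ℝ)/2)

/-- `(g_n)` is a sequence of independent standard complex Gaussian random variables:
independent, with i.i.d. real and imaginary parts distributed as `N(0, 1/2)`
(so that `E|g_n|² = 1`). -/
def IsStdGaussianSeq {Ω : Type*} [MeasurableSpace Ω] (P : Measure Ω) (g : ℕ → Ω → ℂ) : Prop :=
  iIndepFun g P ∧
  ∀ n : ℕ, Measurable (g n) ∧
    Measure.map (fun ω => (g n ω).re) P = gaussianReal 0 (1/2) ∧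
    Measure.map (fun ω => (g n ω).im) P = gaussianReal 0 (1/2) ∧
    IndepFun (fun ω => (g n ω).re) (fun ω => (g n ω).im) P

/-- Real part of the truncated solution `u_N(t,x) = Σ_{n=1}^N c_n(t) e_n(x)`. -/
def reU (N : ℕ) (c : ℕ → ℝ → ℂ) (t : ℝ) (x : EuclideanSpace ℝ (Fin 3)) : ℝ :=
  ∑ m ∈ Finset.Icc 1 N, (c m t).re * en m x

/-- `c` is the coefficient family of a global solution of the truncated nonlinear
wave system `i c_n' = nπ c_n − (nπ)^{-1} ∫_B |Re u_N|^α (Re u_N) e_n dx`,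
with data `c_n(0) = g_n/(nπ)`. -/
def IsTruncSol (α : ℝ) (N : ℕ) (g : ℕ → ℂ) (c : ℕ → ℝ → ℂ) : Prop :=
  (∀ n : ℕ, n ∉ Finset.Icc 1 N → c n = 0) ∧
  ∀ n ∈ Finset.Icc 1 N,
    c n 0 = g n / ((n * π : ℝ) : ℂ) ∧
    ∀ t : ℝ, HasDerivAt (c n)
      (-Complex.I * (((n * π : ℝ) : ℂ) * c n t -
        ((n * π : ℝ) : ℂ)⁻¹ *
          ((∫ x in ballB, |reU N c t x| ^ α * reU N c t x * en n x : ℝ) : ℂ))) t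

/-- Coefficients of the free evolution `S(t)(P_N φ^{(ω)})` of the truncated random data. -/
def linCoef (g : ℕ → ℂ) (N n : ℕ) (t : ℝ) : ℂ :=
  if n ∈ Finset.Icc 1 N then
    g n / ((n * π : ℝ) : ℂ) * Complex.exp (-Complex.I * ((n * π * t : ℝ) : ℂ)) else 0

end

noncomputable section auxproof

open MeasureTheory Real Set
open scoped ENNReal

local notation "E3" => EuclideanSpace ℝ (Fin 3)

private def cc : ℝ := (2 * π) ^ (-(1:ℝ)/2)

private lemma cc_pos : 0 < cc := Real.rpow_pos_of_pos (by positivity) _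

/-- min(nπ, r⁻¹) -/
private def gmin (n : ℕ) (r : ℝ) : ℝ := min ((n:ℝ) * π) r⁻¹

private lemma abs_en_le (n : ℕ) (x : E3) : |en n x| ≤ cc * ((n:ℝ) * π) := by
  rw [en]
  split_ifs with h
  · rw [abs_of_nonneg (by positivity : (0:ℝ) ≤ (2 * π) ^ (-(1:ℝ)/2) * ((n:ℝ) * π))]
    exact le_of_eq rfl
  · have hx : 0 < ‖x‖ := norm_pos_iff.mpr h
    rw [abs_div, abs_mul, abs_norm, div_le_iff₀ hx]
    have h1 : |Real.sin ((n:ℝ) * π * ‖x‖)| ≤ |(n:ℝ) * π * ‖x‖| := Real.abs_sin_le_abs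
    have h2 : |(2 * π : ℝ) ^ (-(1:ℝ)/2)| = cc := abs_of_pos cc_pos
    rw [h2]
    calc cc * |Real.sin ((n:ℝ) * π * ‖x‖)| ≤ cc * |(n:ℝ) * π * ‖x‖| :=
          mul_le_mul_of_nonneg_left h1 cc_pos.le
      _ = cc * ((n:ℝ) * π) * ‖x‖ := by
          rw [abs_of_nonneg (by positivity)]; ring

private lemma abs_en_le' (n : ℕ) (x : E3) (hx : x ≠ 0) :
    |en n x| ≤ cc * gmin n ‖x‖ := by
  have hx0 : 0 < ‖x‖ := norm_pos_iff.mpr hx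
  rw [gmin, mul_min_of_nonneg _ _ cc_pos.le]
  refine le_min (abs_en_le n x) ?_
  rw [en, if_neg hx]
  have h2 : |(2 * π : ℝ) ^ (-(1:ℝ)/2)| = cc := abs_of_pos cc_pos
  rw [abs_div, abs_mul, abs_norm, h2, div_le_iff₀ hx0]
  calc cc * |Real.sin ((n:ℝ) * π * ‖x‖)| ≤ cc * 1 :=
        mul_le_mul_of_nonneg_left (Real.abs_sin_le_one _) cc_pos.le
    _ = cc * ‖x‖⁻¹ * ‖x‖ := by field_simp

private lemma en_meas (n : ℕ) : Measurable (en n) := by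
  unfold en
  refine Measurable.ite ?_ measurable_const ?_
  · exact measurableSet_eq
  · exact (measurable_const.mul
      (Real.measurable_sin.comp (measurable_norm.const_mul ((n:ℝ) * π)))).div measurable_norm

private lemma gmin_meas (n : ℕ) : Measurable (gmin n) :=
  measurable_const.min measurable_inv

private lemma gmin_nonneg (n : ℕ) {r : ℝ} (hr : 0 ≤ r) : 0 ≤ gmin n r :=
  le_min (by positivity) (inv_nonneg.mpr hr)

/-- Polar coordinates formula for radial integrals over the unit ball of ℝ³. -/
private lemma radial_eq (g : ℝ → ℝ) (hg : Measurable g) :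
    ∫ x in ballB, g ‖x‖ =
      3 * (volume (Metric.ball (0:E3) 1)).toReal * ∫ r in Ioo (0:ℝ) 1, r ^ 2 * g r := by
  have h1 : ∫ x in ballB, g ‖x‖ = ∫ x : E3, (fun r => if r < 1 then g r else 0) ‖x‖ := by
    rw [← integral_indicator (by exact measurableSet_ball : MeasurableSet ballB)]
    congr 1
    funext x
    by_cases h : ‖x‖ < 1
    · simp [Set.indicator_apply, ballB, Metric.mem_ball, dist_zero_right, h]
    · simp [Set.indicator_apply, ballB, Metric.mem_ball, dist_zero_right, h]
  have h2 : ∫ y in Ioi (0:ℝ), y ^ (3 - 1) • (if y < 1 then g y else 0) =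
      ∫ r in Ioo (0:ℝ) 1, r ^ 2 * g r := by
    rw [← Set.Ioi_inter_Iio, ← setIntegral_indicator measurableSet_Iio]
    refine setIntegral_congr_fun measurableSet_Ioi fun y _ => ?_
    by_cases h : y < 1
    · simp [Set.indicator_apply, Set.mem_Iio, h, smul_eq_mul]
    · simp [Set.indicator_apply, Set.mem_Iio, h, smul_eq_mul]
  rw [h1, MeasureTheory.integral_fun_norm_addHaar volume (fun r => if r < 1 then g r else 0)]
  have hdim : Module.finrank ℝ E3 = 3 := finrank_euclideanSpace_fin
  rw [hdim, h2, nsmul_eq_mul, smul_eq_mul]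
  push_cast
  simp only [measureReal_def]
  ring

private lemma integrableOn_rsq_g (n : ℕ) (p : ℝ) (hp0 : 0 ≤ p) {S : Set ℝ}
    (hS : MeasurableSet S) (hsub : S ⊆ Ioc 0 1) :
    IntegrableOn (fun r => r ^ 2 * (cc * gmin n r) ^ p) S volume := by
  refine Measure.integrableOn_of_bounded (M := (cc * ((n:ℝ) * π)) ^ p) ?_ ?_ ?_
  · exact ne_of_lt (lt_of_le_of_lt (measure_mono hsub)
      (by simp [Real.volume_Ioc]))
  · exact ((measurable_id.pow_const 2).mul
      ((measurable_const.mul (gmin_meas n)).pow_const p)).aestronglyMeasurable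
  · refine (ae_restrict_iff' hS).mpr (Filter.Eventually.of_forall fun r hr => ?_)
    have h1 : 0 < r := (hsub hr).1
    have h2 : r ≤ 1 := (hsub hr).2
    have hg0 : 0 ≤ cc * gmin n r := mul_nonneg cc_pos.le (gmin_nonneg n h1.le)
    have hle : (cc * gmin n r) ^ p ≤ (cc * ((n:ℝ) * π)) ^ p :=
      Real.rpow_le_rpow hg0 (mul_le_mul_of_nonneg_left (min_le_left _ _) cc_pos.le) hp0
    rw [Real.norm_eq_abs,
      abs_of_nonneg (mul_nonneg (by positivity) (Real.rpow_nonneg hg0 p))]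
    calc r ^ 2 * (cc * gmin n r) ^ p ≤ 1 * (cc * ((n:ℝ) * π)) ^ p := by
          refine mul_le_mul ?_ hle (Real.rpow_nonneg hg0 p) zero_le_one
          calc r ^ 2 ≤ 1 ^ 2 := pow_le_pow_left₀ h1.le h2 2
            _ = 1 := one_pow 2
      _ = (cc * ((n:ℝ) * π)) ^ p := one_mul _

/-- Step 1 + 2 : reduction of the eigenfunction Lᵖ integral to a radial 1-D integral. -/
private lemma main_int_le (n : ℕ) (p : ℝ) (hp0 : 0 ≤ p) :
    ∫ x in ballB, ‖((en n x : ℝ) : ℂ)‖ ^ p ≤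
      3 * (volume (Metric.ball (0:E3) 1)).toReal *
        ∫ r in Ioo (0:ℝ) 1, r ^ 2 * (cc * gmin n r) ^ p := by
  have hgmeas : Measurable fun r : ℝ => (cc * gmin n r) ^ p :=
    (measurable_const.mul (gmin_meas n)).pow_const p
  have hball : volume ballB ≠ ∞ := by
    show volume (Metric.ball (0:E3) 1) ≠ ∞
    exact measure_ball_lt_top.ne
  -- integrability of both sides on the ball
  have hint1 : IntegrableOn (fun x => ‖((en n x : ℝ) : ℂ)‖ ^ p) ballB volume := by
    refine Measure.integrableOn_of_bounded (M := (cc * ((n:ℝ) * π)) ^ p) hball ?_ ?_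
    · refine Measurable.aestronglyMeasurable ?_
      have : Measurable fun x : E3 => |en n x| := (en_meas n).abs
      simpa [Complex.norm_real, Real.norm_eq_abs] using this.pow_const p
    · refine Filter.Eventually.of_forall fun x => ?_
      have h1 : ‖((en n x : ℝ) : ℂ)‖ = |en n x| := by
        rw [Complex.norm_real, Real.norm_eq_abs]
      rw [Real.norm_eq_abs, abs_of_nonneg (Real.rpow_nonneg (norm_nonneg _) p), h1]
      exact Real.rpow_le_rpow (abs_nonneg _) (abs_en_le n x) hp0
  have hint2 : IntegrableOn (fun x => (cc * gmin n ‖x‖) ^ p) ballB volume := by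
    refine Measure.integrableOn_of_bounded (M := (cc * ((n:ℝ) * π)) ^ p) hball ?_ ?_
    · exact ((measurable_const.mul ((gmin_meas n).comp measurable_norm)).pow_const p).aestronglyMeasurable
    · refine Filter.Eventually.of_forall fun x => ?_
      have hg0 : 0 ≤ cc * gmin n ‖x‖ := mul_nonneg cc_pos.le (gmin_nonneg n (norm_nonneg x))
      rw [Real.norm_eq_abs, abs_of_nonneg (Real.rpow_nonneg hg0 p)]
      exact Real.rpow_le_rpow hg0
        (mul_le_mul_of_nonneg_left (min_le_left _ _) cc_pos.le) hp0
  -- a.e. pointwise comparison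
  have hae : (fun x => ‖((en n x : ℝ) : ℂ)‖ ^ p) ≤ᵐ[volume]
      fun x : E3 => (cc * gmin n ‖x‖) ^ p := by
    have h0 : ∀ᵐ x : E3 ∂volume, x ≠ 0 := by
      rw [ae_iff]
      simpa [not_not, Set.setOf_eq_eq_singleton] using measure_singleton (0 : E3)
    filter_upwards [h0] with x hx
    have h1 : ‖((en n x : ℝ) : ℂ)‖ = |en n x| := by
      rw [Complex.norm_real, Real.norm_eq_abs]
    rw [h1]
    exact Real.rpow_le_rpow (abs_nonneg _) (abs_en_le' n x hx) hp0
  calc ∫ x in ballB, ‖((en n x : ℝ) : ℂ)‖ ^ p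
      ≤ ∫ x in ballB, (cc * gmin n ‖x‖) ^ p :=
        setIntegral_mono_ae hint1 hint2 hae
    _ = 3 * (volume (Metric.ball (0:E3) 1)).toReal *
        ∫ r in Ioo (0:ℝ) 1, r ^ 2 * (cc * gmin n r) ^ p :=
        radial_eq _ hgmeas

private lemma pt_eq (p : ℝ) {r : ℝ} (hr : 0 < r) :
    r ^ 2 * (cc * r⁻¹) ^ p = cc ^ p * r ^ (2 - p) := by
  rw [Real.mul_rpow cc_pos.le (inv_nonneg.mpr hr.le), Real.inv_rpow hr.le,
    ← Real.rpow_neg hr.le]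
  calc r ^ 2 * (cc ^ p * r ^ (-p)) = cc ^ p * (r ^ ((2:ℕ):ℝ) * r ^ (-p)) := by
        rw [Real.rpow_natCast]; ring
    _ = cc ^ p * r ^ (2 - p) := by
        rw [← Real.rpow_add hr]; norm_num [sub_eq_add_neg]

private lemma J_le_lt3 (n : ℕ) (p : ℝ) (hp0 : 0 ≤ p) (hp3 : p < 3) :
    ∫ r in Ioo (0:ℝ) 1, r ^ 2 * (cc * gmin n r) ^ p ≤ cc ^ p * (1 / (3 - p)) := by
  have hint2 : IntegrableOn (fun r : ℝ => cc ^ p * r ^ (2 - p)) (Ioo 0 1) volume := by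
    have h := (intervalIntegral.intervalIntegrable_rpow' (a := 0) (b := 1)
      (r := 2 - p) (by linarith)).1
    exact (h.mono_set Ioo_subset_Ioc_self).const_mul _
  have hmono : ∀ r ∈ Ioo (0:ℝ) 1, r ^ 2 * (cc * gmin n r) ^ p ≤ cc ^ p * r ^ (2 - p) := by
    intro r hr
    have hr0 : 0 < r := hr.1
    have h1 : (cc * gmin n r) ^ p ≤ (cc * r⁻¹) ^ p :=
      Real.rpow_le_rpow (mul_nonneg cc_pos.le (gmin_nonneg n hr0.le))
        (mul_le_mul_of_nonneg_left (min_le_right _ _) cc_pos.le) hp0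
    calc r ^ 2 * (cc * gmin n r) ^ p ≤ r ^ 2 * (cc * r⁻¹) ^ p :=
          mul_le_mul_of_nonneg_left h1 (by positivity)
      _ = cc ^ p * r ^ (2 - p) := pt_eq p hr0
  have hIle := setIntegral_mono_on
    (integrableOn_rsq_g n p hp0 measurableSet_Ioo Ioo_subset_Ioc_self)
    hint2 measurableSet_Ioo hmono
  refine hIle.trans ?_
  rw [MeasureTheory.integral_const_mul]
  have hval : ∫ r in Ioo (0:ℝ) 1, r ^ (2 - p) = 1 / (3 - p) := by
    rw [← integral_Ioc_eq_integral_Ioo, ← intervalIntegral.integral_of_le zero_le_one,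
      integral_rpow (Or.inl (by linarith))]
    rw [Real.one_rpow, Real.zero_rpow (ne_of_gt (by linarith : (0:ℝ) < 2 - p + 1))]
    rw [sub_zero]
    congr 1
    ring
  rw [hval]

private lemma b_gt_one (n : ℕ) (hn : 1 ≤ n) : 1 < (n:ℝ) * π := by
  have h1 : (1:ℝ) ≤ (n:ℝ) := by exact_mod_cast hn
  nlinarith [Real.pi_gt_three]

private lemma J_le_ge3 (n : ℕ) (hn : 1 ≤ n) (p : ℝ) (hp0 : 0 ≤ p) :
    ∫ r in Ioo (0:ℝ) 1, r ^ 2 * (cc * gmin n r) ^ p ≤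
      cc ^ p * (((n:ℝ) * π) ^ (p - 3) / 3) +
        cc ^ p * ∫ r in Ioo (((n:ℝ) * π)⁻¹) 1, r ^ (2 - p) := by
  set b : ℝ := (n:ℝ) * π with hbdef
  have hb1 : 1 < b := b_gt_one n hn
  have hb0 : 0 < b := lt_trans one_pos hb1
  have ha0 : 0 < b⁻¹ := inv_pos.mpr hb0
  have ha1 : b⁻¹ < 1 := by
    rw [inv_lt_one_iff₀]; right; exact hb1
  have hunion : Ioc (0:ℝ) b⁻¹ ∪ Ioo b⁻¹ 1 = Ioo 0 1 := Set.Ioc_union_Ioo_eq_Ioo ha0.le ha1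
  have hdisj : Disjoint (Ioc (0:ℝ) b⁻¹) (Ioo b⁻¹ 1) := by
    rw [Set.disjoint_left]
    rintro r ⟨_, h2⟩ ⟨h3, _⟩
    exact absurd h2 (not_le.mpr h3)
  have hi1 : IntegrableOn (fun r : ℝ => r ^ 2 * (cc * gmin n r) ^ p) (Ioc 0 b⁻¹) volume :=
    integrableOn_rsq_g n p hp0 measurableSet_Ioc (Ioc_subset_Ioc_right ha1.le)
  have hi2 : IntegrableOn (fun r : ℝ => r ^ 2 * (cc * gmin n r) ^ p) (Ioo b⁻¹ 1) volume :=
    integrableOn_rsq_g n p hp0 measurableSet_Ioo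
      (fun r hr => ⟨lt_trans ha0 hr.1, hr.2.le⟩)
  rw [← hunion, setIntegral_union hdisj measurableSet_Ioo hi1 hi2]
  have hP1 : ∫ r in Ioc (0:ℝ) b⁻¹, r ^ 2 * (cc * gmin n r) ^ p ≤ cc ^ p * (b ^ (p - 3) / 3) := by
    have hconst : IntegrableOn (fun r : ℝ => (cc * b) ^ p * r ^ 2) (Ioc 0 b⁻¹) volume :=
      ((intervalIntegral.intervalIntegrable_pow 2 (a := 0) (b := b⁻¹) (μ := volume)).1).const_mul _
    have hmono : ∀ r ∈ Ioc (0:ℝ) b⁻¹, r ^ 2 * (cc * gmin n r) ^ p ≤ (cc * b) ^ p * r ^ 2 := by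
      intro r hr
      have hr0 : 0 < r := hr.1
      have h1 : (cc * gmin n r) ^ p ≤ (cc * b) ^ p :=
        Real.rpow_le_rpow (mul_nonneg cc_pos.le (gmin_nonneg n hr0.le))
          (mul_le_mul_of_nonneg_left (min_le_left _ _) cc_pos.le) hp0
      calc r ^ 2 * (cc * gmin n r) ^ p ≤ r ^ 2 * (cc * b) ^ p :=
            mul_le_mul_of_nonneg_left h1 (by positivity)
        _ = (cc * b) ^ p * r ^ 2 := by ring
    refine (setIntegral_mono_on hi1 hconst measurableSet_Ioc hmono).trans (le_of_eq ?_)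
    rw [MeasureTheory.integral_const_mul, ← intervalIntegral.integral_of_le ha0.le, integral_pow]
    rw [Real.mul_rpow cc_pos.le hb0.le]
    have h3 : (b⁻¹ ^ (2 + 1) - 0 ^ (2 + 1) : ℝ) / ((2:ℕ) + 1) = (b ^ ((3:ℕ):ℝ))⁻¹ / 3 := by
      rw [Real.rpow_natCast, inv_pow]
      norm_num
    rw [h3, ← Real.rpow_neg hb0.le]
    rw [div_eq_mul_inv, div_eq_mul_inv, mul_assoc, ← mul_assoc (b ^ p), ← Real.rpow_add hb0]
    norm_num [sub_eq_add_neg]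
  have hP2 : ∫ r in Ioo b⁻¹ 1, r ^ 2 * (cc * gmin n r) ^ p ≤
      cc ^ p * ∫ r in Ioo b⁻¹ 1, r ^ (2 - p) := by
    rw [← MeasureTheory.integral_const_mul]
    have hint2 : IntegrableOn (fun r : ℝ => cc ^ p * r ^ (2 - p)) (Ioo b⁻¹ 1) volume := by
      have h0 : (0:ℝ) ∉ Set.uIcc b⁻¹ 1 := by
        rw [Set.uIcc_of_le ha1.le]
        rintro ⟨h, _⟩
        exact absurd h (not_le.mpr ha0)
      have h := (intervalIntegral.intervalIntegrable_rpow (μ := volume) (r := 2 - p) (a := b⁻¹) (b := 1)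
        (Or.inr h0)).1
      exact (h.mono_set Ioo_subset_Ioc_self).const_mul _
    refine setIntegral_mono_on hi2 hint2 measurableSet_Ioo ?_
    intro r hr
    have hr0 : 0 < r := lt_trans ha0 hr.1
    have hrb : r⁻¹ < b := by
      have h := inv_strictAnti₀ ha0 hr.1
      rwa [inv_inv] at h
    have hg : gmin n r = r⁻¹ := min_eq_right hrb.le
    rw [hg, pt_eq p hr0]
  exact add_le_add hP1 hP2

private lemma tail_eq_log (n : ℕ) (hn : 1 ≤ n) :
    ∫ r in Ioo (((n:ℝ) * π)⁻¹) 1, r ^ (2 - (3:ℝ)) = Real.log ((n:ℝ) * π) := by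
  have hb1 : 1 < (n:ℝ) * π := b_gt_one n hn
  have hb0 : 0 < (n:ℝ) * π := lt_trans one_pos hb1
  have ha0 : 0 < ((n:ℝ) * π)⁻¹ := inv_pos.mpr hb0
  have ha1 : ((n:ℝ) * π)⁻¹ ≤ 1 := by
    rw [inv_le_one_iff₀]; right; exact hb1.le
  calc ∫ r in Ioo (((n:ℝ) * π)⁻¹) 1, r ^ (2 - (3:ℝ))
      = ∫ r in Ioo (((n:ℝ) * π)⁻¹) 1, r⁻¹ := by
        refine setIntegral_congr_fun measurableSet_Ioo fun r _ => ?_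
        rw [show (2 - (3:ℝ)) = -1 by norm_num, Real.rpow_neg_one]
    _ = Real.log ((n:ℝ) * π) := by
        rw [← integral_Ioc_eq_integral_Ioo, ← intervalIntegral.integral_of_le ha1,
          integral_inv_of_pos ha0 one_pos, one_div, inv_inv]

private lemma tail_le_gt3 (n : ℕ) (hn : 1 ≤ n) (p : ℝ) (hp : 3 < p) :
    ∫ r in Ioo (((n:ℝ) * π)⁻¹) 1, r ^ (2 - p) ≤ ((n:ℝ) * π) ^ (p - 3) / (p - 3) := by
  have hb1 : 1 < (n:ℝ) * π := b_gt_one n hn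
  have hb0 : 0 < (n:ℝ) * π := lt_trans one_pos hb1
  have ha0 : 0 < ((n:ℝ) * π)⁻¹ := inv_pos.mpr hb0
  have ha1 : ((n:ℝ) * π)⁻¹ ≤ 1 := by
    rw [inv_le_one_iff₀]; right; exact hb1.le
  have h0 : (0:ℝ) ∉ Set.uIcc (((n:ℝ) * π)⁻¹) 1 := by
    rw [Set.uIcc_of_le ha1]
    rintro ⟨h, _⟩
    exact absurd h (not_le.mpr ha0)
  have hval : ∫ r in Ioo (((n:ℝ) * π)⁻¹) 1, r ^ (2 - p) =
      (1 - (((n:ℝ) * π)⁻¹) ^ (2 - p + 1)) / (2 - p + 1) := by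
    rw [← integral_Ioc_eq_integral_Ioo, ← intervalIntegral.integral_of_le ha1,
      integral_rpow (Or.inr ⟨ne_of_lt (by linarith : 2 - p < -1), h0⟩)]
    rw [Real.one_rpow]
  rw [hval]
  have hXval : (((n:ℝ) * π)⁻¹) ^ (2 - p + 1) = ((n:ℝ) * π) ^ (p - 3) := by
    rw [Real.inv_rpow hb0.le, ← Real.rpow_neg hb0.le]
    congr 1
    ring
  rw [hXval]
  have hX1 : 1 ≤ ((n:ℝ) * π) ^ (p - 3) := by
    have h := Real.rpow_le_rpow_of_exponent_le hb1.le (by linarith : (0:ℝ) ≤ p - 3)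
    rwa [Real.rpow_zero] at h
  have heq : (1 - ((n:ℝ) * π) ^ (p - 3)) / (2 - p + 1) =
      (((n:ℝ) * π) ^ (p - 3) - 1) / (p - 3) := by
    rw [div_eq_div_iff (by linarith) (by linarith)]
    ring
  rw [heq]
  have hd : 0 < p - 3 := by linarith
  gcongr
  linarith


/-- Final packaging: the integral bound, as a bound on `lpNormB`. -/
private lemma lp_le (n : ℕ) (p : ℝ) (hp0 : 0 < p) {M : ℝ}
    (h : ∫ x in ballB, ‖((en n x : ℝ) : ℂ)‖ ^ p ≤ M) :
    lpNormB p (fun x => ((en n x : ℝ) : ℂ)) ≤ M ^ (1 / p) := by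
  simp only [lpNormB]
  exact Real.rpow_le_rpow
    (integral_nonneg fun x => Real.rpow_nonneg (norm_nonneg _) p) h (by positivity)

end auxproof

/-- `L^p` bounds for the radial eigenfunctions: `‖e_n‖_{L^p(B)} ≲ 1`
for `p < 3`, `≲ (log(n+1))^{1/3}` for `p = 3`, and `≲ n^{1-3/p}` for `p > 3`. -/
theorem eigenfunction_lp_bounds :
    (∀ p : ℝ, 1 ≤ p → p < 3 → ∃ C : ℝ, ∀ n : ℕ, 1 ≤ n →
      lpNormB p (fun x => (en n x : ℂ)) ≤ C) ∧
    (∃ C : ℝ, ∀ n : ℕ, 1 ≤ n →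
      lpNormB 3 (fun x => (en n x : ℂ)) ≤ C * (Real.log ((n : ℝ) + 1)) ^ ((1:ℝ)/3)) ∧
    (∀ p : ℝ, 3 < p → ∃ C : ℝ, ∀ n : ℕ, 1 ≤ n →
      lpNormB p (fun x => (en n x : ℂ)) ≤ C * (n : ℝ) ^ (1 - 3/p)) := by
  set V : ℝ := 3 * (volume (Metric.ball (0 : EuclideanSpace ℝ (Fin 3)) 1)).toReal with hVdef
  have hV : (0:ℝ) ≤ V := by positivity
  refine ⟨fun p hp1 hp3 => ?_, ?_, fun p hp => ?_⟩
  · -- case 1 ≤ p < 3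
    refine ⟨(V * (cc ^ p * (1 / (3 - p)))) ^ (1 / p), fun n hn => ?_⟩
    have hp0 : (0:ℝ) ≤ p := by linarith
    have hI : ∫ x in ballB, ‖((en n x : ℝ) : ℂ)‖ ^ p ≤ V * (cc ^ p * (1 / (3 - p))) :=
      (main_int_le n p hp0).trans (mul_le_mul_of_nonneg_left (J_le_lt3 n p hp0 hp3) hV)
    exact lp_le n p (by linarith) hI
  · -- case p = 3
    refine ⟨(V * cc ^ (3:ℝ) * ((1/3 + Real.log π) / Real.log 2 + 1)) ^ (1/(3:ℝ)),
      fun n hn => ?_⟩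
    have h30 : (0:ℝ) ≤ 3 := by norm_num
    have hb1 : 1 < (n:ℝ) * π := b_gt_one n hn
    have hn1 : (1:ℝ) ≤ (n:ℝ) := by exact_mod_cast hn
    have hL0 : 0 < Real.log ((n:ℝ) + 1) := Real.log_pos (by linarith)
    have hlog2 : 0 < Real.log 2 := Real.log_pos one_lt_two
    have hlogpi : 0 ≤ Real.log π := Real.log_nonneg (by nlinarith [Real.pi_gt_three])
    have hJ : ∫ r in Ioo (0:ℝ) 1, r ^ 2 * (cc * gmin n r) ^ (3:ℝ) ≤
        cc ^ (3:ℝ) * (1/3 + Real.log ((n:ℝ) * π)) := by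
      have h1 := J_le_ge3 n hn 3 h30
      rw [tail_eq_log n hn] at h1
      refine h1.trans (le_of_eq ?_)
      rw [show (3:ℝ) - 3 = 0 by norm_num, Real.rpow_zero]
      ring
    have hlogb : Real.log ((n:ℝ) * π) ≤ Real.log ((n:ℝ) + 1) + Real.log π := by
      rw [Real.log_mul (by positivity) (ne_of_gt Real.pi_pos)]
      have h := Real.log_le_log (by linarith : (0:ℝ) < (n:ℝ)) (by linarith : (n:ℝ) ≤ (n:ℝ) + 1)
      linarith
    have hcoef : 1/3 + Real.log ((n:ℝ) * π) ≤
        ((1/3 + Real.log π) / Real.log 2 + 1) * Real.log ((n:ℝ) + 1) := by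
      have h2 : Real.log 2 ≤ Real.log ((n:ℝ) + 1) :=
        Real.log_le_log (by norm_num) (by linarith)
      have h3 : 1/3 + Real.log π = ((1/3 + Real.log π) / Real.log 2) * Real.log 2 := by
        field_simp
      have h4 : ((1/3 + Real.log π) / Real.log 2) * Real.log 2 ≤
          ((1/3 + Real.log π) / Real.log 2) * Real.log ((n:ℝ) + 1) :=
        mul_le_mul_of_nonneg_left h2 (div_nonneg (by linarith) hlog2.le)
      have h5 : 1/3 + Real.log π ≤
          ((1/3 + Real.log π) / Real.log 2) * Real.log ((n:ℝ) + 1) :=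
        le_trans (le_of_eq h3) h4
      have h6 : ((1/3 + Real.log π) / Real.log 2 + 1) * Real.log ((n:ℝ) + 1) =
          ((1/3 + Real.log π) / Real.log 2) * Real.log ((n:ℝ) + 1) + Real.log ((n:ℝ) + 1) := by
        ring
      rw [h6]
      linarith
    have hA : (0:ℝ) ≤ V * cc ^ (3:ℝ) * ((1/3 + Real.log π) / Real.log 2 + 1) := by
      refine mul_nonneg (mul_nonneg hV (Real.rpow_nonneg cc_pos.le 3)) ?_
      have : 0 ≤ (1/3 + Real.log π) / Real.log 2 := div_nonneg (by linarith) hlog2.le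
      linarith
    have hI : ∫ x in ballB, ‖((en n x : ℝ) : ℂ)‖ ^ (3:ℝ) ≤
        (V * cc ^ (3:ℝ) * ((1/3 + Real.log π) / Real.log 2 + 1)) * Real.log ((n:ℝ) + 1) := by
      refine (main_int_le n 3 h30).trans ?_
      have h7 := hJ.trans (mul_le_mul_of_nonneg_left hcoef (Real.rpow_nonneg cc_pos.le 3))
      refine (mul_le_mul_of_nonneg_left h7 hV).trans (le_of_eq ?_)
      ring
    have hfin := lp_le n 3 (by norm_num) hI
    refine hfin.trans (le_of_eq ?_)
    rw [Real.mul_rpow hA hL0.le]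
  · -- case p > 3
    have hp0 : (0:ℝ) ≤ p := by linarith
    have hp' : (0:ℝ) < p := by linarith
    refine ⟨(V * (cc ^ p * (1/3 + 1/(p - 3)))) ^ (1/p) * π ^ (1 - 3/p), fun n hn => ?_⟩
    have hb1 : 1 < (n:ℝ) * π := b_gt_one n hn
    have hb0 : 0 < (n:ℝ) * π := lt_trans one_pos hb1
    have hD0 : 0 ≤ V * (cc ^ p * (1/3 + 1/(p - 3))) :=
      mul_nonneg hV (mul_nonneg (Real.rpow_nonneg cc_pos.le p)
        (add_nonneg (by norm_num) (le_of_lt (one_div_pos.mpr (by linarith)))))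
    have htail := tail_le_gt3 n hn p hp
    have hJ : ∫ r in Ioo (0:ℝ) 1, r ^ 2 * (cc * gmin n r) ^ p ≤
        cc ^ p * (((n:ℝ) * π) ^ (p - 3) / 3) + cc ^ p * (((n:ℝ) * π) ^ (p - 3) / (p - 3)) :=
      (J_le_ge3 n hn p hp0).trans
        (add_le_add le_rfl (mul_le_mul_of_nonneg_left htail (Real.rpow_nonneg cc_pos.le p)))
    have hI : ∫ x in ballB, ‖((en n x : ℝ) : ℂ)‖ ^ p ≤
        (V * (cc ^ p * (1/3 + 1/(p - 3)))) * ((n:ℝ) * π) ^ (p - 3) := by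
      refine (main_int_le n p hp0).trans ?_
      refine (mul_le_mul_of_nonneg_left hJ hV).trans (le_of_eq ?_)
      ring
    have hfin := lp_le n p hp' hI
    refine hfin.trans (le_of_eq ?_)
    rw [Real.mul_rpow hD0 (Real.rpow_nonneg hb0.le _), ← Real.rpow_mul hb0.le]
    have hexp : (p - 3) * (1/p) = 1 - 3/p := by
      field_simp
    rw [hexp, Real.mul_rpow (Nat.cast_nonneg n) Real.pi_pos.le]
    ring
end

section
/- Let 0 < s < 1 and p ≥ 1 satisfy 4p > 3 and 1 − 3/(4p) < s − 3/8. Then there exists a constant C > of such that for every finitely supported sequence (a_n)_{n≥1} of complex numbers with Σ_{n≥1} |a_n|² ≤ 1, the function u₁(t,x) = Σ_{n≥1} ⟨n⟩^{−s} a_n e_n(x) e^{2πint} satisfies ‖u₁‖_{L^{4p}_x(B; L^8_t([0,1]))} ≤ C. -/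
open MeasureTheory ProbabilityTheory Filter Real Set
open scoped Classical

section AuxNBB
open intervalIntegral
open scoped ENNReal NNReal

noncomputable def cex (n : ℕ) (t : ℝ) : ℂ := Complex.exp (2*π*Complex.I*n*t)

lemma cex_norm (n : ℕ) (t : ℝ) : ‖cex n t‖ = 1 := by
  have : (2*π*Complex.I*n*t : ℂ) = ((2*π*n*t : ℝ) : ℂ) * Complex.I := by push_cast; ring
  rw [cex, this, Complex.norm_exp_ofReal_mul_I]

lemma cex_orth (n m : ℕ) :
    (∫ t in (0:ℝ)..1, cex n t * (starRingEnd ℂ) (cex m t)) = if n = m then 1 else 0 := by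
  have key : ∀ t : ℝ, cex n t * (starRingEnd ℂ) (cex m t)
      = Complex.exp (((((n:ℤ) - (m:ℤ)) : ℤ) * (2*(π:ℂ)*Complex.I)) * (t:ℂ)) := by
    intro t
    rw [cex, cex, ← Complex.exp_conj, ← Complex.exp_add]
    congr 1
    have h1 : (2*(π:ℂ)*Complex.I*(m:ℂ)*(t:ℂ)) = ((2*π*m*t : ℝ):ℂ) * Complex.I := by
      push_cast; ring
    rw [h1, map_mul, Complex.conj_ofReal, Complex.conj_I]
    push_cast; ring
  simp_rw [key]
  by_cases h : n = m
  · subst h; simp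
  · have hk : ((((n:ℤ) - (m:ℤ)) : ℤ) : ℂ) ≠ 0 := by
      rw [Int.cast_ne_zero, sub_ne_zero]
      exact_mod_cast h
    have hc : ((((n:ℤ) - (m:ℤ)) : ℤ) : ℂ) * (2*(π:ℂ)*Complex.I) ≠ 0 := by
      apply mul_ne_zero hk
      simp [Real.pi_ne_zero, Complex.I_ne_zero, Complex.ofReal_ne_zero]
    rw [integral_exp_mul_complex hc]
    rw [if_neg h]
    simp only [Complex.ofReal_one, mul_one, Complex.ofReal_zero, mul_zero, Complex.exp_zero]
    rw [Complex.exp_int_mul_two_pi_mul_I]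
    simp

lemma cex_continuous (n : ℕ) : Continuous (cex n) := by
  unfold cex; fun_prop

lemma norm_sq_eq_re_mul_conj (z : ℂ) : (‖z‖:ℝ)^2 = (z * (starRingEnd ℂ) z).re := by
  rw [Complex.mul_conj]
  simp [Complex.sq_norm]

lemma plancherel (S : Finset ℕ) (c : ℕ → ℂ) :
    (∫ t in (0:ℝ)..1, ‖∑ n ∈ S, c n * cex n t‖^2) = ∑ n ∈ S, ‖c n‖^2 := by
  set f : ℝ → ℂ := fun t => ∑ n ∈ S, c n * cex n t with hf
  have hcont : Continuous f := by
    apply continuous_finset_sum; intro n _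
    exact continuous_const.mul (cex_continuous n)
  have hint : ∀ n m : ℕ, IntervalIntegrable
      (fun t => (c n * (starRingEnd ℂ) (c m)) * (cex n t * (starRingEnd ℂ) (cex m t)))
      volume (0:ℝ) 1 := by
    intro n m
    apply Continuous.intervalIntegrable
    exact continuous_const.mul ((cex_continuous n).mul (Complex.continuous_conj.comp (cex_continuous m)))
  have expand : ∀ t : ℝ, f t * (starRingEnd ℂ) (f t)
      = ∑ n ∈ S, ∑ m ∈ S, (c n * (starRingEnd ℂ) (c m)) * (cex n t * (starRingEnd ℂ) (cex m t)) := by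
    intro t
    rw [hf]
    simp only [map_sum, map_mul, Finset.sum_mul_sum]
    apply Finset.sum_congr rfl; intro n _
    apply Finset.sum_congr rfl; intro m _
    ring
  have hI : (∫ t in (0:ℝ)..1, f t * (starRingEnd ℂ) (f t))
      = ∑ n ∈ S, c n * (starRingEnd ℂ) (c n) := by
    rw [intervalIntegral.integral_congr (g := fun t => ∑ n ∈ S, ∑ m ∈ S,
      (c n * (starRingEnd ℂ) (c m)) * (cex n t * (starRingEnd ℂ) (cex m t)))
      (fun t _ => expand t)]
    have hint2 : ∀ n ∈ S, IntervalIntegrable (fun t => ∑ m ∈ S,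
        c n * (starRingEnd ℂ) (c m) * (cex n t * (starRingEnd ℂ) (cex m t))) volume (0:ℝ) 1 := by
      intro n _
      apply Continuous.intervalIntegrable
      apply continuous_finset_sum
      intro m _
      exact continuous_const.mul ((cex_continuous n).mul (Complex.continuous_conj.comp (cex_continuous m)))
    rw [intervalIntegral.integral_finset_sum hint2]
    · apply Finset.sum_congr rfl; intro n hn
      rw [intervalIntegral.integral_finset_sum (fun m _ => hint n m)]
      have : ∀ m ∈ S, (∫ t in (0:ℝ)..1,
          (c n * (starRingEnd ℂ) (c m)) * (cex n t * (starRingEnd ℂ) (cex m t)))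
          = (c n * (starRingEnd ℂ) (c m)) * (if n = m then 1 else 0) := by
        intro m _
        rw [intervalIntegral.integral_const_mul, cex_orth]
      rw [Finset.sum_congr rfl this]
      simp only [mul_ite, mul_one, mul_zero]
      rw [Finset.sum_ite_eq _ n (fun m => c n * (starRingEnd ℂ) (c m)), if_pos hn]
  have hpt : ∀ t : ℝ, ‖f t‖^2 = Complex.reCLM (f t * (starRingEnd ℂ) (f t)) := by
    intro t; exact norm_sq_eq_re_mul_conj (f t)
  calc (∫ t in (0:ℝ)..1, ‖f t‖^2)
      = ∫ t in (0:ℝ)..1, Complex.reCLM (f t * (starRingEnd ℂ) (f t)) :=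
        intervalIntegral.integral_congr (fun t _ => hpt t)
    _ = Complex.reCLM (∫ t in (0:ℝ)..1, f t * (starRingEnd ℂ) (f t)) := by
        apply ContinuousLinearMap.intervalIntegral_comp_comm
        apply Continuous.intervalIntegrable
        exact hcont.mul (Complex.continuous_conj.comp hcont)
    _ = ∑ n ∈ S, ‖c n‖^2 := by
        rw [hI, map_sum]
        apply Finset.sum_congr rfl; intro n _
        exact (norm_sq_eq_re_mul_conj (c n)).symm

lemma L8_bound (S : Finset ℕ) (c : ℕ → ℂ) :
    (∫ t in (0:ℝ)..1, ‖∑ n ∈ S, c n * cex n t‖^(8:ℕ))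
      ≤ ((S.card : ℝ))^(3:ℕ) * (∑ n ∈ S, ‖c n‖^2)^(4:ℕ) := by
  set f : ℝ → ℂ := fun t => ∑ n ∈ S, c n * cex n t with hf
  have hcont : Continuous f := by
    apply continuous_finset_sum; intro n _
    exact continuous_const.mul (cex_continuous n)
  set A : ℝ := ∑ n ∈ S, ‖c n‖ with hA
  have hA0 : 0 ≤ A := Finset.sum_nonneg (fun n _ => norm_nonneg _)
  have hfA : ∀ t : ℝ, ‖f t‖ ≤ A := by
    intro t
    refine (norm_sum_le _ _).trans ?_
    apply Finset.sum_le_sum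
    intro n _
    rw [norm_mul, cex_norm, mul_one]
  have hpt : ∀ t : ℝ, ‖f t‖^(8:ℕ) ≤ A^(6:ℕ) * ‖f t‖^2 := by
    intro t
    have h1 : ‖f t‖^(8:ℕ) = ‖f t‖^(6:ℕ) * ‖f t‖^2 := by ring
    rw [h1]
    apply mul_le_mul_of_nonneg_right _ (by positivity)
    exact pow_le_pow_left₀ (norm_nonneg _) (hfA t) 6
  have step1 : (∫ t in (0:ℝ)..1, ‖f t‖^(8:ℕ)) ≤ ∫ t in (0:ℝ)..1, A^(6:ℕ) * ‖f t‖^2 := by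
    apply intervalIntegral.integral_mono_on zero_le_one
    · exact ((hcont.norm.pow 8)).intervalIntegrable _ _
    · exact (continuous_const.mul (hcont.norm.pow 2)).intervalIntegrable _ _
    · exact fun t _ => hpt t
  have step2 : (∫ t in (0:ℝ)..1, A^(6:ℕ) * ‖f t‖^2) = A^(6:ℕ) * ∑ n ∈ S, ‖c n‖^2 := by
    rw [intervalIntegral.integral_const_mul, plancherel]
  have hCS : A^2 ≤ (S.card : ℝ) * ∑ n ∈ S, ‖c n‖^2 := by
    have := Finset.sum_mul_sq_le_sq_mul_sq S (fun _ => (1:ℝ)) (fun n => ‖c n‖)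
    simpa using this
  have hsum0 : 0 ≤ ∑ n ∈ S, ‖c n‖^2 := Finset.sum_nonneg (fun n _ => by positivity)
  calc (∫ t in (0:ℝ)..1, ‖f t‖^(8:ℕ)) ≤ A^(6:ℕ) * ∑ n ∈ S, ‖c n‖^2 := step1.trans (le_of_eq step2)
    _ = (A^2)^(3:ℕ) * ∑ n ∈ S, ‖c n‖^2 := by ring
    _ ≤ ((S.card : ℝ) * ∑ n ∈ S, ‖c n‖^2)^(3:ℕ) * ∑ n ∈ S, ‖c n‖^2 := by
        apply mul_le_mul_of_nonneg_right _ hsum0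
        exact pow_le_pow_left₀ (by positivity) hCS 3
    _ = ((S.card : ℝ))^(3:ℕ) * (∑ n ∈ S, ‖c n‖^2)^(4:ℕ) := by ring

lemma ball_rpow_integrable {γ : ℝ} (hγ0 : 0 < γ) (hγ : γ < 3) :
    IntegrableOn (fun x : EuclideanSpace ℝ (Fin 3) => ‖x‖ ^ (-γ)) (Metric.ball 0 1) := by
  set E := EuclideanSpace ℝ (Fin 3)
  set μ := volume.restrict (Metric.ball (0:E) 1) with hμ
  set V := volume (Metric.ball (0:E) 1) with hV
  have hVlt : V < ⊤ := measure_ball_lt_top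
  have hmeas : Measurable (fun x : E => ‖x‖ ^ (-γ)) := measurable_norm.pow_const _
  have hnn : ∀ x : E, 0 ≤ ‖x‖ ^ (-γ) := fun x => Real.rpow_nonneg (norm_nonneg x) _
  constructor
  · exact hmeas.aestronglyMeasurable
  · rw [hasFiniteIntegral_iff_norm]
    have h1 : ∀ x : E, ENNReal.ofReal ‖‖x‖ ^ (-γ)‖ = ENNReal.ofReal (‖x‖ ^ (-γ)) := fun x => by
      rw [Real.norm_eq_abs, abs_of_nonneg (hnn x)]
    simp_rw [h1]
    rw [lintegral_eq_lintegral_meas_lt μ (Filter.Eventually.of_forall hnn) hmeas.aemeasurable]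
    -- bound the measure of superlevel sets
    have hsub : ∀ t : ℝ, 0 < t → {a : E | t < ‖a‖ ^ (-γ)} ⊆ Metric.ball 0 (t ^ (-γ⁻¹)) := by
      intro t ht a ha
      simp only [mem_setOf_eq] at ha
      rw [Metric.mem_ball, dist_zero_right]
      rcases eq_or_lt_of_le (norm_nonneg a) with h0 | h0
      · rw [← h0]; exact Real.rpow_pos_of_pos ht _
      · have h2 : (‖a‖ ^ (-γ)) ^ (-γ⁻¹) < t ^ (-γ⁻¹) := by
          apply Real.rpow_lt_rpow_of_neg ht ha
          simp [inv_pos.mpr hγ0]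
        rwa [← Real.rpow_mul (le_of_lt h0), neg_mul_neg, mul_inv_cancel₀ (ne_of_gt hγ0),
          Real.rpow_one] at h2
    have hbound2 : ∀ t : ℝ, 1 < t →
        μ {a : E | t < ‖a‖ ^ (-γ)} ≤ ENNReal.ofReal (t ^ (-(3/γ))) * V := by
      intro t ht
      have ht0 : (0:ℝ) < t := lt_trans one_pos ht
      calc μ {a : E | t < ‖a‖ ^ (-γ)} ≤ volume {a : E | t < ‖a‖ ^ (-γ)} :=
            Measure.restrict_le_self _
        _ ≤ volume (Metric.ball (0:E) (t ^ (-γ⁻¹))) := measure_mono (hsub t ht0)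
        _ = ENNReal.ofReal ((t ^ (-γ⁻¹)) ^ Module.finrank ℝ E) * V :=
            Measure.addHaar_ball _ _ (le_of_lt (Real.rpow_pos_of_pos ht0 _))
        _ = ENNReal.ofReal (t ^ (-(3/γ))) * V := by
            congr 1
            rw [finrank_euclideanSpace_fin, ← Real.rpow_natCast (t ^ (-γ⁻¹)) 3,
              ← Real.rpow_mul (le_of_lt ht0)]
            norm_num
            ring_nf
    have hsplit : (∫⁻ t in Ioi (0:ℝ), μ {a : E | t < ‖a‖ ^ (-γ)})
        ≤ (∫⁻ t in Ioc (0:ℝ) 1, μ {a : E | t < ‖a‖ ^ (-γ)})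
          + ∫⁻ t in Ioi (1:ℝ), μ {a : E | t < ‖a‖ ^ (-γ)} :=
      le_trans (lintegral_mono_set Ioi_subset_Ioc_union_Ioi) (lintegral_union_le _ _ _)
    refine lt_of_le_of_lt hsplit (ENNReal.add_lt_top.2 ⟨?_, ?_⟩)
    · have h2 : (∫⁻ t in Ioc (0:ℝ) 1, μ {a : E | t < ‖a‖ ^ (-γ)})
          ≤ ∫⁻ _ in Ioc (0:ℝ) 1, V := by
        apply lintegral_mono
        intro t
        calc μ {a : E | t < ‖a‖ ^ (-γ)} ≤ μ univ := measure_mono (subset_univ _)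
          _ = V := by rw [hμ, Measure.restrict_apply_univ]
      refine lt_of_le_of_lt h2 ?_
      rw [setLIntegral_const]
      exact ENNReal.mul_lt_top hVlt (by simp [Real.volume_Ioc])
    · have hle : (∫⁻ t in Ioi (1:ℝ), μ {a : E | t < ‖a‖ ^ (-γ)})
          ≤ ∫⁻ t in Ioi (1:ℝ), ENNReal.ofReal (t ^ (-(3/γ))) * V := by
        apply setLIntegral_mono' measurableSet_Ioi
        intro t ht
        exact hbound2 t ht
      refine lt_of_le_of_lt hle ?_
      rw [lintegral_mul_const' V _ hVlt.ne]
      apply ENNReal.mul_lt_top _ hVlt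
      have hint : IntegrableOn (fun t : ℝ => t ^ (-(3/γ))) (Ioi (1:ℝ)) volume := by
        apply integrableOn_Ioi_rpow_of_lt _ one_pos
        rw [neg_lt_neg_iff]
        exact (one_lt_div hγ0).2 (by linarith)
      have hfin := hint.hasFiniteIntegral
      rw [hasFiniteIntegral_iff_norm] at hfin
      refine lt_of_le_of_lt (lintegral_mono (fun t => ?_)) hfin
      exact ENNReal.ofReal_le_ofReal (le_abs_self _)

lemma min_le_rpow_interp {a b θ : ℝ} (ha : 0 < a) (hb : 0 < b) (hθ0 : 0 ≤ θ) (hθ1 : θ ≤ 1) :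
    min a b ≤ a ^ θ * b ^ (1-θ) := by
  have hm : 0 < min a b := lt_min ha hb
  have : min a b = (min a b) ^ θ * (min a b) ^ (1-θ) := by
    rw [← Real.rpow_add hm, add_sub_cancel, Real.rpow_one]
  rw [this]
  apply mul_le_mul
  · exact Real.rpow_le_rpow hm.le (min_le_left _ _) hθ0
  · exact Real.rpow_le_rpow hm.le (min_le_right _ _) (by linarith)
  · exact Real.rpow_nonneg hm.le _
  · exact Real.rpow_nonneg ha.le _

lemma memL8 (g : ℝ → ℂ) (hg : Continuous g) : MemLp g 8 (volume.restrict (Icc (0:ℝ) 1)) := by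
  haveI : IsFiniteMeasure (volume.restrict (Icc (0:ℝ) 1)) :=
    ⟨by rw [Measure.restrict_apply_univ]; exact measure_Icc_lt_top⟩
  obtain ⟨C, hC⟩ := isCompact_Icc.exists_bound_of_continuousOn hg.continuousOn
  apply MemLp.of_bound hg.aestronglyMeasurable C
  filter_upwards [ae_restrict_mem measurableSet_Icc] with t ht using hC t ht

lemma toReal_eLpNorm_eq (g : ℝ → ℂ) (hg : Continuous g) :
    (eLpNorm g 8 (volume.restrict (Icc (0:ℝ) 1))).toReal
      = (∫ t in Icc (0:ℝ) 1, ‖g t‖ ^ (8:ℝ)) ^ (8:ℝ)⁻¹ := by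
  rw [(memL8 g hg).eLpNorm_eq_integral_rpow_norm (by norm_num) (by norm_num)]
  have h8 : ((8:ℝ≥0∞)).toReal = (8:ℝ) := by norm_num
  rw [h8, ENNReal.toReal_ofReal]
  apply Real.rpow_nonneg
  exact integral_nonneg (fun t => Real.rpow_nonneg (norm_nonneg _) _)

lemma en_zero (x : EuclideanSpace ℝ (Fin 3)) : en 0 x = 0 := by
  unfold en
  by_cases h : x = 0 <;> simp [h]

lemma en_abs_le (n : ℕ) (x : EuclideanSpace ℝ (Fin 3)) (hx : x ≠ 0) :
    |en n x| ≤ (2 * π) ^ (-(1:ℝ)/2) * min ((n:ℝ) * π) ‖x‖⁻¹ := by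
  have hr : 0 < ‖x‖ := norm_pos_iff.mpr hx
  have hκ : 0 < (2 * π) ^ (-(1:ℝ)/2) := Real.rpow_pos_of_pos (by positivity) _
  rw [en, if_neg hx, abs_div, abs_mul, abs_of_pos hκ, abs_of_pos hr]
  rw [div_le_iff₀ hr]
  have hsin : |Real.sin ((n:ℝ) * π * ‖x‖)| ≤ min ((n:ℝ) * π * ‖x‖) 1 := by
    apply le_min
    · calc |Real.sin ((n:ℝ) * π * ‖x‖)| ≤ |(n:ℝ) * π * ‖x‖| := Real.abs_sin_le_abs
        _ = (n:ℝ) * π * ‖x‖ := abs_of_nonneg (by positivity)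
    · exact Real.abs_sin_le_one _
  calc (2 * π) ^ (-(1:ℝ)/2) * |Real.sin ((n:ℝ) * π * ‖x‖)|
      ≤ (2 * π) ^ (-(1:ℝ)/2) * min ((n:ℝ) * π * ‖x‖) 1 :=
        mul_le_mul_of_nonneg_left hsin hκ.le
    _ = (2 * π) ^ (-(1:ℝ)/2) * (min ((n:ℝ) * π) ‖x‖⁻¹ * ‖x‖) := by
        rw [min_mul_of_nonneg _ _ hr.le, inv_mul_cancel₀ hr.ne']
    _ = (2 * π) ^ (-(1:ℝ)/2) * min ((n:ℝ) * π) ‖x‖⁻¹ * ‖x‖ := by ring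

lemma jap_pos (y : ℝ) : 0 < jap y := Real.sqrt_pos.mpr (by positivity)

lemma le_jap (n : ℕ) : (n:ℝ) ≤ jap n := by
  rw [jap]
  calc (n:ℝ) = Real.sqrt ((n:ℝ)^2) := (Real.sqrt_sq (Nat.cast_nonneg n)).symm
    _ ≤ _ := Real.sqrt_le_sqrt (by linarith)

lemma one_le_two_pi : (1:ℝ) ≤ 2 * π := by nlinarith [Real.pi_gt_three]

lemma step6 (s ε u r : ℝ) (hu : 0 ≤ u) (hr : 0 < r) (hθpos : 0 < s - 3/8 - ε)
    (hθ1 : s - 3/8 - ε ≤ 1) :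
    (2:ℝ)^(u*(3/8)) * ((2*π)^(-(1:ℝ)/2) * (2:ℝ)^(-(u*s)) * min ((2:ℝ)^u * (2*π)) r⁻¹)
      ≤ (2*π)^(-(1:ℝ)/2) * (2*π) * (2:ℝ)^(-(u*ε)) * r^(-(11/8 - s + ε)) := by
  set θ := s - 3/8 - ε with hθ
  have hκ : (0:ℝ) < (2*π)^(-(1:ℝ)/2) := Real.rpow_pos_of_pos (by positivity) _
  have h2u : (0:ℝ) < (2:ℝ)^u := Real.rpow_pos_of_pos two_pos _
  have hmin : min ((2:ℝ)^u * (2*π)) r⁻¹ ≤ ((2:ℝ)^u * (2*π))^θ * (r⁻¹)^(1-θ) :=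
    min_le_rpow_interp (by positivity) (by positivity) hθpos.le hθ1
  have h2m : ((2:ℝ)^u * (2*π))^θ = (2:ℝ)^(u*θ) * (2*π)^θ := by
    rw [Real.mul_rpow h2u.le (by positivity), ← Real.rpow_mul (le_of_lt two_pos)]
  have hrinv : (r⁻¹)^(1-θ) = r^(θ-1) := by
    rw [← Real.rpow_neg_one r, ← Real.rpow_mul hr.le]
    congr 1; ring
  have h3 : (2:ℝ)^(u*(3/8)) * ((2:ℝ)^(-(u*s)) * (2:ℝ)^(u*θ)) = (2:ℝ)^(-(u*ε)) := by
    rw [← Real.rpow_add two_pos, ← Real.rpow_add two_pos]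
    congr 1; rw [hθ]; ring
  have hβ : -(11/8 - s + ε) = θ - 1 := by rw [hθ]; ring
  have h2pi : (2*π)^θ ≤ 2*π := by
    calc (2*π)^θ ≤ (2*π)^(1:ℝ) := Real.rpow_le_rpow_of_exponent_le one_le_two_pi hθ1
      _ = 2*π := Real.rpow_one _
  calc (2:ℝ)^(u*(3/8)) * ((2*π)^(-(1:ℝ)/2) * (2:ℝ)^(-(u*s)) * min ((2:ℝ)^u * (2*π)) r⁻¹)
      ≤ (2:ℝ)^(u*(3/8)) * ((2*π)^(-(1:ℝ)/2) * (2:ℝ)^(-(u*s)) * (((2:ℝ)^u * (2*π))^θ * (r⁻¹)^(1-θ))) := by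
        apply mul_le_mul_of_nonneg_left _ (Real.rpow_nonneg (le_of_lt two_pos) _)
        exact mul_le_mul_of_nonneg_left hmin (by positivity)
    _ = (2*π)^(-(1:ℝ)/2) * (2*π)^θ * (2:ℝ)^(-(u*ε)) * r^(θ-1) := by
        rw [h2m, hrinv, ← h3]; ring
    _ ≤ (2*π)^(-(1:ℝ)/2) * (2*π) * (2:ℝ)^(-(u*ε)) * r^(-(11/8 - s + ε)) := by
        rw [hβ]
        exact mul_le_mul_of_nonneg_right (mul_le_mul_of_nonneg_right
          (mul_le_mul_of_nonneg_left h2pi hκ.le) (Real.rpow_nonneg (le_of_lt two_pos) _))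
          (Real.rpow_nonneg hr.le _)

lemma key_estimate (s ε : ℝ) (hε : 0 < ε) (hθpos : 0 < s - 3/8 - ε) (hθ1 : s - 3/8 - ε ≤ 1)
    (a : ℕ → ℂ) (ha : (Function.support a).Finite) (ha1 : (∑' n : ℕ, ‖a n‖^2) ≤ 1)
    (x : EuclideanSpace ℝ (Fin 3)) (hx : x ≠ 0) :
    ((∫ t in Icc (0:ℝ) 1, ‖∑' n : ℕ, ((jap (n:ℝ) ^ (-s) : ℝ) : ℂ) * a n * ((en n x : ℝ) : ℂ)
        * Complex.exp (2 * π * Complex.I * n * t)‖ ^ (8:ℝ)) ^ (1/(8:ℝ)))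
      ≤ (2*π)^(-(1:ℝ)/2) * (2*π) * (1 - (2:ℝ)^(-ε))⁻¹
          * ‖x‖ ^ (-(11/8 - s + ε)) := by
  have hr : 0 < ‖x‖ := norm_pos_iff.mpr hx
  have hκ : (0:ℝ) < (2*π)^(-(1:ℝ)/2) := Real.rpow_pos_of_pos (by positivity) _
  set q2 : ℝ := (2:ℝ)^(-ε) with hq2def
  have hq0 : 0 ≤ q2 := Real.rpow_nonneg (by norm_num) _
  have hq1 : q2 < 1 := Real.rpow_lt_one_of_one_lt_of_neg one_lt_two (by linarith)
  set c : ℕ → ℂ := fun n => ((jap (n:ℝ) ^ (-s) : ℝ) : ℂ) * a n * ((en n x : ℝ) : ℂ) with hcdef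
  set T := ha.toFinset with hTdef
  set S' := T.erase 0 with hS'def
  set J := T.sup id + 1 with hJdef
  set fib : ℕ → Finset ℕ := fun j => S'.filter (fun n => Nat.log 2 n = j) with hfibdef
  set fj : ℕ → ℝ → ℂ := fun j t => ∑ n ∈ fib j, c n * cex n t with hfjdef
  set f : ℝ → ℂ := fun t => ∑ n ∈ S', c n * cex n t with hfdef
  set μ₁ := volume.restrict (Icc (0:ℝ) 1) with hμ₁def
  have hcontU : ∀ U : Finset ℕ, Continuous (fun t => ∑ n ∈ U, c n * cex n t) := by
    intro U
    apply continuous_finset_sum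
    exact fun n _ => continuous_const.mul (cex_continuous n)
  have hf_cont : Continuous f := hcontU S'
  have hfj_cont : ∀ j, Continuous (fj j) := fun j => hcontU (fib j)
  have hsummable : Summable (fun n => ‖a n‖^2) := by
    apply summable_of_ne_finset_zero (s := T)
    intro n hn
    have : a n = 0 := by
      by_contra h
      exact hn (ha.mem_toFinset.mpr h)
    simp [this]
  have hsum_le : ∀ U : Finset ℕ, (∑ n ∈ U, ‖a n‖^2) ≤ 1 := by
    intro U
    exact le_trans (Summable.sum_le_tsum U (fun n _ => by positivity) hsummable) ha1
  have hFf : ∀ t : ℝ, (∑' n : ℕ, ((jap (n:ℝ) ^ (-s) : ℝ) : ℂ) * a n * ((en n x : ℝ) : ℂ)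
      * Complex.exp (2 * π * Complex.I * n * t)) = f t := by
    intro t
    have h1 : (∑' n : ℕ, ((jap (n:ℝ) ^ (-s) : ℝ) : ℂ) * a n * ((en n x : ℝ) : ℂ)
        * Complex.exp (2 * π * Complex.I * n * t)) = ∑ n ∈ T, c n * cex n t := by
      apply tsum_eq_sum
      intro n hn
      have : a n = 0 := by
        by_contra h
        exact hn (ha.mem_toFinset.mpr h)
      simp [this]
    rw [h1]
    show ∑ n ∈ T, c n * cex n t = ∑ n ∈ S', c n * cex n t
    rw [hS'def, eq_comm]
    apply Finset.sum_erase
    simp [hcdef, en_zero]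
  have hdecomp : ∀ t : ℝ, f t = ∑ j ∈ Finset.range J, fj j t := by
    intro t
    rw [eq_comm, hfdef]
    apply Finset.sum_fiberwise_of_maps_to
    intro n hn
    have hnT : n ∈ T := Finset.mem_of_mem_erase hn
    have h1 : Nat.log 2 n ≤ n := Nat.log_le_self 2 n
    have h2 : n ≤ T.sup id := Finset.le_sup (f := id) hnT
    exact Finset.mem_range.mpr (by omega)
  have block_est : ∀ j : ℕ, (eLpNorm (fj j) 8 μ₁).toReal
      ≤ (2*π)^(-(1:ℝ)/2) * (2*π) * q2^j * ‖x‖^(-(11/8 - s + ε)) := by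
    intro j
    set u : ℝ := (j:ℝ) with hudef
    have hP0 : (0:ℝ) < (2:ℝ)^u := Real.rpow_pos_of_pos two_pos _
    have hPnat : (2:ℝ)^u = ((2^j : ℕ) : ℝ) := by
      rw [hudef, Real.rpow_natCast]
      push_cast
      ring
    set D : ℝ := (2*π)^(-(1:ℝ)/2) * (2:ℝ)^(-(u*s)) * min ((2:ℝ)^u * (2*π)) ‖x‖⁻¹ with hDdef
    have hD0 : 0 ≤ D := by
      apply mul_nonneg (mul_nonneg hκ.le (Real.rpow_nonneg (by norm_num) _))
      exact le_min (by positivity) (inv_nonneg.mpr hr.le)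
    have hcb : ∀ n ∈ fib j, ‖c n‖ ≤ D * ‖a n‖ := by
      intro n hn
      have hmem := Finset.mem_filter.mp hn
      have hnS : n ∈ S' := hmem.1
      have hn0 : n ≠ 0 := Finset.ne_of_mem_erase hnS
      have hlog : Nat.log 2 n = j := hmem.2
      have hlow : (2:ℕ)^j ≤ n := by rw [← hlog]; exact Nat.pow_log_le_self 2 hn0
      have hhigh : n < (2:ℕ)^(j+1) := by rw [← hlog]; exact Nat.lt_pow_succ_log_self one_lt_two n
      have hlowR : (2:ℝ)^u ≤ (n:ℝ) := by rw [hPnat]; exact_mod_cast hlow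
      have hhighR : (n:ℝ) ≤ 2 * (2:ℝ)^u := by
        have h1 : (n:ℝ) ≤ ((2^(j+1) : ℕ):ℝ) := by exact_mod_cast hhigh.le
        calc (n:ℝ) ≤ ((2^(j+1) : ℕ):ℝ) := h1
          _ = 2 * (2:ℝ)^u := by rw [hPnat]; push_cast; ring
      have hnormc : ‖c n‖ = jap (n:ℝ) ^ (-s) * ‖a n‖ * |en n x| := by
        rw [hcdef]
        simp only [norm_mul, Complex.norm_real, Real.norm_eq_abs]
        rw [abs_of_nonneg (Real.rpow_nonneg (jap_pos _).le _)]
      have hA : jap (n:ℝ) ^ (-s) ≤ (2:ℝ)^(-(u*s)) := by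
        have h1 : (2:ℝ)^u ≤ jap (n:ℝ) := le_trans hlowR (le_jap n)
        calc jap (n:ℝ) ^ (-s) ≤ ((2:ℝ)^u) ^ (-s) :=
              Real.rpow_le_rpow_of_nonpos hP0 h1 (by linarith)
          _ = (2:ℝ)^(-(u*s)) := by
              rw [← Real.rpow_mul (le_of_lt two_pos)]
              congr 1; ring
      have hB : |en n x| ≤ (2*π)^(-(1:ℝ)/2) * min ((2:ℝ)^u * (2*π)) ‖x‖⁻¹ := by
        refine le_trans (en_abs_le n x hx) ?_
        apply mul_le_mul_of_nonneg_left _ hκ.le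
        apply min_le_min _ le_rfl
        calc (n:ℝ) * π ≤ (2 * (2:ℝ)^u) * π :=
              mul_le_mul_of_nonneg_right hhighR Real.pi_pos.le
          _ = (2:ℝ)^u * (2*π) := by ring
      calc ‖c n‖ = jap (n:ℝ) ^ (-s) * ‖a n‖ * |en n x| := hnormc
        _ ≤ (2:ℝ)^(-(u*s)) * ‖a n‖ * ((2*π)^(-(1:ℝ)/2) * min ((2:ℝ)^u * (2*π)) ‖x‖⁻¹) := by
            apply mul_le_mul
            · exact mul_le_mul_of_nonneg_right hA (norm_nonneg _)
            · exact hB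
            · exact abs_nonneg _
            · have : (0:ℝ) ≤ (2:ℝ)^(-(u*s)) := Real.rpow_nonneg (by norm_num) _
              positivity
        _ = D * ‖a n‖ := by rw [hDdef]; ring
    have hX : (∑ n ∈ fib j, ‖c n‖^2) ≤ D^2 := by
      calc (∑ n ∈ fib j, ‖c n‖^2) ≤ ∑ n ∈ fib j, (D * ‖a n‖)^2 :=
            Finset.sum_le_sum (fun n hn => pow_le_pow_left₀ (norm_nonneg _) (hcb n hn) 2)
        _ = D^2 * ∑ n ∈ fib j, ‖a n‖^2 := by
            rw [Finset.mul_sum]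
            exact Finset.sum_congr rfl (fun n _ => by ring)
        _ ≤ D^2 * 1 := mul_le_mul_of_nonneg_left (hsum_le _) (by positivity)
        _ = D^2 := mul_one _
    have hcard : (((fib j).card) : ℝ) ≤ (2:ℝ)^u := by
      have hsub : fib j ⊆ Finset.Ico (2^j) (2^(j+1)) := by
        intro n hn
        have hmem := Finset.mem_filter.mp hn
        have hn0 : n ≠ 0 := Finset.ne_of_mem_erase hmem.1
        rw [Finset.mem_Ico]
        constructor
        · rw [← hmem.2]; exact Nat.pow_log_le_self 2 hn0
        · rw [← hmem.2]; exact Nat.lt_pow_succ_log_self one_lt_two n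
      have hcn : (fib j).card ≤ 2^j := by
        calc (fib j).card ≤ (Finset.Ico (2^j) (2^(j+1))).card := Finset.card_le_card hsub
          _ = 2^(j+1) - 2^j := Nat.card_Ico _ _
          _ = 2^j := by rw [pow_succ]; omega
      rw [hPnat]; exact_mod_cast hcn
    have hIj0 : 0 ≤ ∫ t in Icc (0:ℝ) 1, ‖fj j t‖^(8:ℝ) :=
      integral_nonneg (fun t => Real.rpow_nonneg (norm_nonneg _) _)
    have hIj_eq : (∫ t in Icc (0:ℝ) 1, ‖fj j t‖^(8:ℝ))
        = ∫ t in (0:ℝ)..1, ‖fj j t‖^(8:ℕ) := by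
      rw [intervalIntegral.integral_of_le zero_le_one, ← integral_Icc_eq_integral_Ioc]
      apply MeasureTheory.integral_congr_ae
      filter_upwards with t
      rw [← Real.rpow_natCast ‖fj j t‖ 8]
      norm_num
    have hIble : (∫ t in Icc (0:ℝ) 1, ‖fj j t‖^(8:ℝ))
        ≤ ((2:ℝ)^u)^(3:ℕ) * (D^2)^(4:ℕ) := by
      rw [hIj_eq]
      have hL8 := L8_bound (fib j) c
      simp only [hfjdef]
      refine le_trans hL8 ?_
      apply mul_le_mul
      · exact pow_le_pow_left₀ (by positivity) hcard 3
      · exact pow_le_pow_left₀ (Finset.sum_nonneg fun n _ => by positivity) hX 4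
      · exact pow_nonneg (Finset.sum_nonneg fun n _ => by positivity) 4
      · positivity
    have h7 : (((2:ℝ)^u)^(3:ℕ) * (D^2)^(4:ℕ)) ^ (8:ℝ)⁻¹ = (2:ℝ)^(u*(3/8)) * D := by
      have e1 : ((2:ℝ)^u)^(3:ℕ) * (D^2)^(4:ℕ) = (2:ℝ)^(u*3) * D^(8:ℕ) := by
        rw [← Real.rpow_natCast ((2:ℝ)^u) 3, ← Real.rpow_mul (le_of_lt two_pos)]
        push_cast
        ring
      rw [e1, Real.mul_rpow (Real.rpow_nonneg (by norm_num) _) (pow_nonneg hD0 _),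
        ← Real.rpow_mul (le_of_lt two_pos), ← Real.rpow_natCast D 8,
        ← Real.rpow_mul hD0,
        show u*3*(8:ℝ)⁻¹ = u*(3/8) by ring,
        show ((8:ℕ):ℝ)*(8:ℝ)⁻¹ = 1 by norm_num,
        Real.rpow_one]
    have h9 : (2:ℝ)^(-(u*ε)) = q2^j := by
      rw [hq2def, ← Real.rpow_natCast ((2:ℝ)^(-ε)) j, ← Real.rpow_mul (le_of_lt two_pos)]
      congr 1
      rw [hudef]; ring
    have h8 := step6 s ε u ‖x‖ (by positivity) hr hθpos hθ1
    calc (eLpNorm (fj j) 8 μ₁).toReal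
        = (∫ t in Icc (0:ℝ) 1, ‖fj j t‖^(8:ℝ)) ^ (8:ℝ)⁻¹ := toReal_eLpNorm_eq _ (hfj_cont j)
      _ ≤ (((2:ℝ)^u)^(3:ℕ) * (D^2)^(4:ℕ)) ^ (8:ℝ)⁻¹ :=
          Real.rpow_le_rpow hIj0 hIble (by norm_num)
      _ = (2:ℝ)^(u*(3/8)) * D := h7
      _ ≤ (2*π)^(-(1:ℝ)/2) * (2*π) * (2:ℝ)^(-(u*ε)) * ‖x‖^(-(11/8 - s + ε)) := by
          rw [hDdef]
          exact h8
      _ = (2*π)^(-(1:ℝ)/2) * (2*π) * q2^j * ‖x‖^(-(11/8 - s + ε)) := by rw [h9]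
  -- assemble
  have hfunext : f = ∑ j ∈ Finset.range J, fj j := by
    funext t
    rw [hdecomp t, Finset.sum_apply]
  have htri : eLpNorm f 8 μ₁ ≤ ∑ j ∈ Finset.range J, eLpNorm (fj j) 8 μ₁ := by
    calc eLpNorm f 8 μ₁ = eLpNorm (∑ j ∈ Finset.range J, fj j) 8 μ₁ := by rw [hfunext]
      _ ≤ ∑ j ∈ Finset.range J, eLpNorm (fj j) 8 μ₁ :=
          eLpNorm_sum_le (fun j _ => (hfj_cont j).aestronglyMeasurable) (by norm_num)
  have hne : ∀ j ∈ Finset.range J, eLpNorm (fj j) 8 μ₁ ≠ ⊤ :=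
    fun j _ => (memL8 _ (hfj_cont j)).eLpNorm_lt_top.ne
  have h2 : (eLpNorm f 8 μ₁).toReal ≤ ∑ j ∈ Finset.range J, (eLpNorm (fj j) 8 μ₁).toReal := by
    calc (eLpNorm f 8 μ₁).toReal
        ≤ (∑ j ∈ Finset.range J, eLpNorm (fj j) 8 μ₁).toReal :=
          ENNReal.toReal_mono (ENNReal.sum_ne_top.mpr hne) htri
      _ = ∑ j ∈ Finset.range J, (eLpNorm (fj j) 8 μ₁).toReal := ENNReal.toReal_sum hne
  have hL : ((∫ t in Icc (0:ℝ) 1, ‖∑' n : ℕ, ((jap (n:ℝ) ^ (-s) : ℝ) : ℂ) * a n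
      * ((en n x : ℝ) : ℂ) * Complex.exp (2 * π * Complex.I * n * t)‖ ^ (8:ℝ)) ^ (1/(8:ℝ)))
      = (eLpNorm f 8 μ₁).toReal := by
    rw [toReal_eLpNorm_eq f hf_cont, one_div]
    congr 1
    apply MeasureTheory.integral_congr_ae
    filter_upwards with t
    rw [hFf t]
  rw [hL]
  have hgeo : (∑ j ∈ Finset.range J, q2^j) ≤ (1 - q2)⁻¹ := by
    refine le_trans (Summable.sum_le_tsum (L := SummationFilter.unconditional ℕ) _ (fun j _ => by positivity) ?_) ?_
    · exact summable_geometric_of_lt_one hq0 hq1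
    · rw [tsum_geometric_of_lt_one hq0 hq1]
  calc (eLpNorm f 8 μ₁).toReal
      ≤ ∑ j ∈ Finset.range J, (eLpNorm (fj j) 8 μ₁).toReal := h2
    _ ≤ ∑ j ∈ Finset.range J, (2*π)^(-(1:ℝ)/2) * (2*π) * q2^j * ‖x‖^(-(11/8 - s + ε)) :=
        Finset.sum_le_sum (fun j _ => block_est j)
    _ = ((2*π)^(-(1:ℝ)/2) * (2*π) * ‖x‖^(-(11/8 - s + ε))) * ∑ j ∈ Finset.range J, q2^j := by
        rw [Finset.mul_sum]
        apply Finset.sum_congr rfl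
        intro j _
        ring
    _ ≤ ((2*π)^(-(1:ℝ)/2) * (2*π) * ‖x‖^(-(11/8 - s + ε))) * (1 - q2)⁻¹ := by
        apply mul_le_mul_of_nonneg_left hgeo
        positivity
    _ = (2*π)^(-(1:ℝ)/2) * (2*π) * (1 - q2)⁻¹ * ‖x‖^(-(11/8 - s + ε)) := by ring

end AuxNBB

/-- Section 3.1 estimate. For `0 < s < 1`, `p ≥ 1` with `4p > 3` and
`1 - 3/(4p) < s - 3/8`: if `Σ|a_n|² ≤ 1` then
`‖Σ ⟨n⟩^{-s} a_n e_n(x) e^{2πint}‖_{L^{4p}_x L^8_t([0,1])} ≤ C`. -/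
theorem nonlinearity_building_block_quartic (s p : ℝ) (hs0 : 0 < s) (hs1 : s < 1)
    (hp1 : 1 ≤ p) (hp3 : 3 < 4*p) (hcond : 1 - 3/(4*p) < s - 3/8) :
    ∃ C : ℝ, 0 < C ∧ ∀ a : ℕ → ℂ, (Function.support a).Finite →
      (∑' n : ℕ, ‖a n‖ ^ 2) ≤ 1 →
      lpLqNorm (4*p) 8 1
        (fun t x => ∑' n : ℕ,
          ((jap (n : ℝ) ^ (-s) : ℝ) : ℂ) * a n * (en n x : ℂ)
            * Complex.exp (2 * π * Complex.I * n * t)) ≤ C := by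
  have h4p : (0:ℝ) < 4*p := by linarith
  have hfrac1 : 3/(4*p) < 1 := by rw [div_lt_one h4p]; linarith
  have h38 : 3/8 < s := by linarith
  have h118 : 11/8 - s < 3/(4*p) := by linarith
  set ε := min ((s - 3/8)/2) ((3/(4*p) - (11/8 - s))/2) with hεdef
  have hε0 : 0 < ε := lt_min (by linarith) (by linarith)
  have hε1 : ε ≤ (s - 3/8)/2 := min_le_left _ _
  have hε2 : ε ≤ (3/(4*p) - (11/8 - s))/2 := min_le_right _ _
  have hθpos : 0 < s - 3/8 - ε := by linarith
  have hθ1 : s - 3/8 - ε ≤ 1 := by linarith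
  set β := 11/8 - s + ε with hβdef
  have hβ0 : 0 < β := by rw [hβdef]; linarith
  set γ := 4*p*β with hγdef
  have hγ0 : 0 < γ := by rw [hγdef]; exact mul_pos h4p hβ0
  have hβlt : β < 3/(4*p) := by rw [hβdef]; linarith
  have hγ3 : γ < 3 := by
    have := (lt_div_iff₀ h4p).mp hβlt
    rw [hγdef]; linarith
  set Cx := (2*π)^(-(1:ℝ)/2) * (2*π) * (1 - (2:ℝ)^(-ε))⁻¹ with hCxdef
  have hq1 : (2:ℝ)^(-ε) < 1 := Real.rpow_lt_one_of_one_lt_of_neg one_lt_two (by linarith)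
  have hCx0 : 0 < Cx := by
    apply mul_pos (mul_pos (Real.rpow_pos_of_pos (by positivity) _) (by positivity))
    rw [inv_pos]; linarith
  have hint : IntegrableOn (fun x : EuclideanSpace ℝ (Fin 3) => Cx^(4*p) * ‖x‖^(-γ))
      (Metric.ball 0 1) := (ball_rpow_integrable hγ0 hγ3).const_mul _
  set K := ∫ x in ballB, Cx^(4*p) * ‖x‖^(-γ) with hKdef
  refine ⟨max (K ^ (1/(4*p))) 1, lt_of_lt_of_le one_pos (le_max_right _ _), ?_⟩
  intro a ha ha1
  rw [lpLqNorm]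
  have hae : ∀ᵐ (x : EuclideanSpace ℝ (Fin 3)) ∂(volume.restrict ballB), x ≠ 0 := by
    refine ae_iff.mpr ?_
    have h1 : {x : EuclideanSpace ℝ (Fin 3) | ¬ x ≠ 0} = {(0:EuclideanSpace ℝ (Fin 3))} := by
      ext y; simp
    rw [h1]
    exact le_antisymm (le_trans (Measure.restrict_le_self _)
      (le_of_eq (measure_singleton 0))) zero_le
  have hnn : ∀ x : EuclideanSpace ℝ (Fin 3),
      0 ≤ ((∫ t in Set.Icc (0:ℝ) 1, ‖∑' n : ℕ, ((jap (n : ℝ) ^ (-s) : ℝ) : ℂ) * a n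
        * (en n x : ℂ) * Complex.exp (2 * π * Complex.I * n * t)‖ ^ (8:ℝ)) ^ (1/(8:ℝ))) := by
    intro x
    exact Real.rpow_nonneg (integral_nonneg fun t => Real.rpow_nonneg (norm_nonneg _) _) _
  have hmono : (∫ x in ballB, ((∫ t in Set.Icc (0:ℝ) 1, ‖∑' n : ℕ,
        ((jap (n : ℝ) ^ (-s) : ℝ) : ℂ) * a n * (en n x : ℂ)
        * Complex.exp (2 * π * Complex.I * n * t)‖ ^ (8:ℝ)) ^ (1/(8:ℝ))) ^ (4*p)) ≤ K := by
    apply integral_mono_of_nonneg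
    · filter_upwards with x
      exact Real.rpow_nonneg (hnn x) _
    · exact hint
    · filter_upwards [hae] with x hx
      have hkey := key_estimate s ε hε0 hθpos hθ1 a ha ha1 x hx
      calc ((∫ t in Set.Icc (0:ℝ) 1, ‖∑' n : ℕ, ((jap (n : ℝ) ^ (-s) : ℝ) : ℂ) * a n
            * (en n x : ℂ) * Complex.exp (2 * π * Complex.I * n * t)‖ ^ (8:ℝ)) ^ (1/(8:ℝ))) ^ (4*p)
          ≤ (Cx * ‖x‖ ^ (-β)) ^ (4*p) := by
            apply Real.rpow_le_rpow (hnn x) _ (le_of_lt h4p)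
            rw [hCxdef, hβdef]
            exact hkey
        _ = Cx^(4*p) * ‖x‖^(-γ) := by
            rw [Real.mul_rpow hCx0.le (Real.rpow_nonneg (norm_nonneg _) _),
              ← Real.rpow_mul (norm_nonneg x)]
            congr 1
            rw [hγdef]; ring
  calc (∫ x in ballB, ((∫ t in Set.Icc (0:ℝ) 1, ‖∑' n : ℕ,
        ((jap (n : ℝ) ^ (-s) : ℝ) : ℂ) * a n * (en n x : ℂ)
        * Complex.exp (2 * π * Complex.I * n * t)‖ ^ (8:ℝ)) ^ (1/(8:ℝ))) ^ (4*p)) ^ (1/(4*p))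
      ≤ K ^ (1/(4*p)) := by
        apply Real.rpow_le_rpow _ hmono (by positivity)
        exact integral_nonneg fun x => Real.rpow_nonneg (hnn x) _
    _ ≤ max (K ^ (1/(4*p))) 1 := le_max_left _ _
end
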